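/- Let Γ be a finite set of nonnegative integers containing 0, with E := #(Γ ∩ 2ℤ) even elements and O := #(Γ ∩ (2ℤ+1)) odd elements, and assume O ≥ E. Then there exist real numbers α_1, ..., α_E such that the function f(x) = 1 + Σ_{k=1}^{E} α_k cos(2πkx) satisfies f^{(γ)}(n) = 0 for every γ ∈ Γ and every integer n. -/

import Mathlib

open Real Finset Matrix

lemma fewnomial_roots : ∀ (n : ℕ) (M : Finset ℕ), M.card = n → ∀ (c : ℕ → ℝ),
    (∃ m ∈ M, c m ≠ 0) → ∀ (S : Finset ℝ), (∀ x ∈ S, 0 < x) →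
    (∀ x ∈ S, ∑ m ∈ M, c m * x ^ m = 0) → S.card < n := by
  intro n
  induction n using Nat.strong_induction_on with
  | _ n IH =>
  intro M hM c hc S hS hz
  obtain ⟨m1, hm1M, hm1⟩ := hc
  have hMne : M.Nonempty := ⟨m1, hm1M⟩
  have hn1 : 1 ≤ n := by
    have := Finset.card_pos.mpr hMne
    omega
  rcases Nat.eq_zero_or_pos S.card with h0 | hSpos
  · omega
  set m0 := M.min' hMne with hm0
  have hm0M : m0 ∈ M := M.min'_mem hMne
  by_cases hrest : ∀ m ∈ M.erase m0, c m = 0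
  · exfalso
    obtain ⟨x, hx⟩ := Finset.card_pos.mp hSpos
    have hsum := hz x hx
    rw [Finset.sum_eq_single m0 (fun b hb hne => by
        rw [hrest b (Finset.mem_erase.mpr ⟨hne, hb⟩), zero_mul])
      (fun h => absurd hm0M h)] at hsum
    have hm1' : m1 = m0 := by
      by_contra h
      exact hm1 (hrest m1 (Finset.mem_erase.mpr ⟨h, hm1M⟩))
    have hxpos := hS x hx
    exact (mul_ne_zero (hm1' ▸ hm1) (pow_ne_zero _ hxpos.ne')) hsum
  · push_neg at hrest
    obtain ⟨mw, hmwM, hmw⟩ := hrest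
    have hmw' : m0 + 1 ≤ mw := by
      obtain ⟨hne, hmem⟩ := Finset.mem_erase.mp hmwM
      have := M.min'_le mw hmem
      omega
    -- the function g = (∑ c m x^m) / x^m0 and its derivative coefficients
    set g : ℝ → ℝ := fun x => ∑ m ∈ M, c m * x ^ (m - m0) with hgdef
    have hg0 : ∀ x ∈ S, g x = 0 := by
      intro x hx
      have hxpos := hS x hx
      have hmul : x ^ m0 * g x = ∑ m ∈ M, c m * x ^ m := by
        rw [hgdef, Finset.mul_sum]
        refine Finset.sum_congr rfl fun m hm => ?_
        have hle : m0 ≤ m := M.min'_le m hm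
        rw [← mul_assoc, mul_comm (x ^ m0), mul_assoc, ← pow_add]
        congr 2
        omega
      have h0 : x ^ m0 * g x = 0 := by rw [hmul]; exact hz x hx
      rcases mul_eq_zero.mp h0 with h | h
      · exact absurd h (pow_ne_zero _ hxpos.ne')
      · exact h
    set c2 : ℕ → ℝ := fun e => c (e + m0 + 1) * ((e + 1 : ℕ) : ℝ) with hc2
    set M2 := (M.erase m0).image (fun m => m - (m0 + 1)) with hM2
    have herased : ∀ m ∈ M.erase m0, m0 + 1 ≤ m := by
      intro m hm
      obtain ⟨hne, hmem⟩ := Finset.mem_erase.mp hm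
      have := M.min'_le m hmem
      omega
    have hM2card : M2.card = n - 1 := by
      rw [hM2, Finset.card_image_of_injOn, Finset.card_erase_of_mem hm0M, hM]
      intro a ha b hb hab
      have hab' : a - (m0 + 1) = b - (m0 + 1) := hab
      have := herased a ha; have := herased b hb
      omega
    have hgderiv : ∀ x : ℝ, HasDerivAt g (∑ e ∈ M2, c2 e * x ^ e) x := by
      intro x
      have h1 : ∀ m ∈ M, HasDerivAt (fun y : ℝ => c m * y ^ (m - m0))
          (c m * (((m - m0 : ℕ) : ℝ) * x ^ (m - m0 - 1))) x :=
        fun m _ => (hasDerivAt_pow _ x).const_mul _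
      have h := HasDerivAt.fun_sum h1
      refine h.congr_deriv (Eq.symm ?_)
      rw [← Finset.add_sum_erase M _ hm0M]
      have hz0 : c m0 * (((m0 - m0 : ℕ) : ℝ) * x ^ (m0 - m0 - 1)) = 0 := by
        simp
      rw [hz0, zero_add, hM2, Finset.sum_image (by
        intro a ha b hb hab
        have hab' : a - (m0 + 1) = b - (m0 + 1) := hab
        have := herased a ha; have := herased b hb
        omega)]
      refine Finset.sum_congr rfl fun m hm => ?_
      have hle := herased m hm
      have e1 : m - (m0 + 1) + m0 + 1 = m := by omega
      have e2 : m - (m0 + 1) + 1 = m - m0 := by omega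
      have e3 : m - (m0 + 1) = m - m0 - 1 := by omega
      show c (m - (m0 + 1) + m0 + 1) * ((m - (m0 + 1) + 1 : ℕ) : ℝ) * x ^ (m - (m0 + 1))
        = c m * (((m - m0 : ℕ) : ℝ) * x ^ (m - m0 - 1))
      rw [e1, e2, e3]
      ring
    have hc2ne : ∃ e ∈ M2, c2 e ≠ 0 := by
      refine ⟨mw - (m0 + 1), Finset.mem_image_of_mem _ hmwM, ?_⟩
      have e1 : mw - (m0 + 1) + m0 + 1 = mw := by omega
      show c (mw - (m0 + 1) + m0 + 1) * ((mw - (m0 + 1) + 1 : ℕ) : ℝ) ≠ 0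
      rw [e1]
      exact mul_ne_zero hmw (by positivity)
    -- Rolle: roots of deriv g between consecutive points of S
    set k := S.card with hk
    set xs : Fin k ≃o {x // x ∈ S} := S.orderIsoOfFin rfl with hxs
    have hgd : ∀ x : ℝ, deriv g x = ∑ e ∈ M2, c2 e * x ^ e := fun x => (hgderiv x).deriv
    have hgc : Continuous g := by
      have : Differentiable ℝ g := fun x => (hgderiv x).differentiableAt
      exact this.continuous
    have hlt : ∀ i : Fin (k - 1), (xs ⟨i, by omega⟩ : ℝ) < (xs ⟨i + 1, by omega⟩ : ℝ) := by
      intro i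
      have : (⟨i, by omega⟩ : Fin k) < ⟨i + 1, by omega⟩ := by
        simp [Fin.lt_def]
      exact_mod_cast xs.strictMono this
    have hR : ∀ i : Fin (k - 1), ∃ ξ ∈ Set.Ioo ((xs ⟨i, by omega⟩ : ℝ)) ((xs ⟨i + 1, by omega⟩ : ℝ)),
        deriv g ξ = 0 := by
      intro i
      refine exists_deriv_eq_zero (hlt i) hgc.continuousOn ?_
      rw [hg0 _ (xs ⟨i, by omega⟩).2, hg0 _ (xs ⟨i + 1, by omega⟩).2]
    choose ξ hξIoo hξzero using hR
    have hξmono : StrictMono ξ := by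
      intro i j hij
      calc ξ i < (xs ⟨i + 1, by omega⟩ : ℝ) := (hξIoo i).2
        _ ≤ (xs ⟨j, by omega⟩ : ℝ) := by
            have : (⟨(i : ℕ) + 1, by omega⟩ : Fin k) ≤ ⟨j, by omega⟩ := by
              have : (i : ℕ) < j := hij
              simp [Fin.le_def]; omega
            exact_mod_cast xs.monotone this
        _ < ξ j := (hξIoo j).1
    set S' : Finset ℝ := Finset.image ξ Finset.univ with hS'
    have hS'card : S'.card = k - 1 := by
      rw [hS', Finset.card_image_of_injective _ hξmono.injective, Finset.card_univ,
        Fintype.card_fin]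
    have hfinal := IH (n - 1) (by omega) M2 hM2card c2 hc2ne S'
      (by
        intro x hx
        obtain ⟨i, _, rfl⟩ := Finset.mem_image.mp hx
        have h1 : (0 : ℝ) < (xs ⟨i, by omega⟩ : ℝ) := hS _ (xs ⟨i, by omega⟩).2
        exact lt_trans h1 (hξIoo i).1)
      (by
        intro x hx
        obtain ⟨i, _, rfl⟩ := Finset.mem_image.mp hx
        rw [← hgd]
        exact hξzero i)
    omega


lemma trig_hasDerivAt {E : ℕ} (α a : Fin E → ℝ) (γ : ℕ) (x : ℝ) :
    HasDerivAt (fun x => (if γ = 0 then (1:ℝ) else 0) +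
        ∑ k : Fin E, α k * (a k ^ γ * cos (a k * x + γ * (π / 2))))
      ((if γ + 1 = 0 then (1:ℝ) else 0) +
        ∑ k : Fin E, α k * (a k ^ (γ + 1) * cos (a k * x + (γ + 1 : ℕ) * (π / 2)))) x := by
  have hterm : ∀ k : Fin E, HasDerivAt
      (fun x => α k * (a k ^ γ * cos (a k * x + γ * (π / 2))))
      (α k * (a k ^ (γ + 1) * cos (a k * x + (γ + 1 : ℕ) * (π / 2)))) x := by
    intro k
    have h1 : HasDerivAt (fun x : ℝ => a k * x + γ * (π / 2)) (a k) x := by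
      simpa using ((hasDerivAt_id x).const_mul (a k)).add_const ((γ : ℝ) * (π / 2))
    have h2 := (Real.hasDerivAt_cos (a k * x + γ * (π / 2))).comp x h1
    have h3 := (h2.const_mul (a k ^ γ)).const_mul (α k)
    refine h3.congr_deriv ?_
    have harg : a k * x + ((γ + 1 : ℕ) : ℝ) * (π / 2)
        = (a k * x + γ * (π / 2)) + π / 2 := by push_cast; ring
    rw [harg, Real.cos_add_pi_div_two, pow_succ]
    ring
  have hsum := HasDerivAt.fun_sum (fun k (_ : k ∈ Finset.univ) => hterm k)
  have := hsum.const_add (if γ = 0 then (1:ℝ) else 0)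
  refine this.congr_deriv ?_
  simp

lemma trig_iteratedDeriv {E : ℕ} (α a : Fin E → ℝ) (γ : ℕ) :
    iteratedDeriv γ (fun x => 1 + ∑ k : Fin E, α k * cos (a k * x))
      = fun x => (if γ = 0 then (1:ℝ) else 0) +
        ∑ k : Fin E, α k * (a k ^ γ * cos (a k * x + γ * (π / 2))) := by
  induction γ with
  | zero => simp
  | succ γ ih =>
    rw [iteratedDeriv_succ, ih]
    funext x
    exact (trig_hasDerivAt α a γ x).deriv

theorem stmt_15 (Γ : Finset ℕ) (h0 : 0 ∈ Γ)
    (E O : ℕ) (hE : (Γ.filter (fun m => Even m)).card = E)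
    (hO : (Γ.filter (fun m => Odd m)).card = O) (hOE : E ≤ O) :
    ∃ α : Fin E → ℝ,
      ∀ γ ∈ Γ, ∀ n : ℤ,
        iteratedDeriv γ
          (fun x : ℝ => 1 + ∑ k : Fin E, α k * Real.cos (2 * Real.pi * ((k : ℕ) + 1) * x))
          (n : ℝ) = 0 := by
  classical
  set Γe := Γ.filter (fun m => Even m) with hΓe
  set M' : Finset ℕ := Γe.image (fun m => m / 2) with hM'
  have hinj2 : ∀ a ∈ Γe, ∀ b ∈ Γe, a / 2 = b / 2 → a = b := by
    intro a ha b hb hab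
    have hea : a % 2 = 0 := Nat.even_iff.mp (Finset.mem_filter.mp ha).2
    have heb : b % 2 = 0 := Nat.even_iff.mp (Finset.mem_filter.mp hb).2
    omega
  have hM'card : M'.card = E := by
    rw [hM', Finset.card_image_of_injOn hinj2, hE]
  set mo := M'.orderIsoOfFin hM'card with hmo
  set md : Fin E → ℕ := fun j => (mo j : ℕ) with hmd
  set y : Fin E → ℝ := fun k => (2 * π * ((k : ℕ) + 1)) ^ 2 with hy
  have hypos : ∀ k, 0 < y k := by
    intro k
    have : (0:ℝ) < 2 * π * ((k : ℕ) + 1) := by positivity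
    positivity
  have hymono : StrictMono y := by
    intro k l hkl
    have h1 : (0:ℝ) < 2 * π * ((k : ℕ) + 1) := by positivity
    have h2 : 2 * π * ((k : ℕ) + 1) < 2 * π * ((l : ℕ) + 1) := by
      have : ((k : ℕ) : ℝ) < ((l : ℕ) : ℝ) := by exact_mod_cast hkl
      nlinarith [Real.pi_pos]
    exact pow_lt_pow_left₀ h2 h1.le (by norm_num)
  set C : Matrix (Fin E) (Fin E) ℝ := fun j k => y k ^ md j with hC
  -- C is invertible
  have hCTinj : Function.Injective Cᵀ.mulVec := by
    rw [Matrix.mulVec_injective_iff]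
    rw [Fintype.linearIndependent_iff]
    intro v hv j
    set c : ℕ → ℝ := fun m => if h : m ∈ M' then v (mo.symm ⟨m, h⟩) else 0 with hc
    have hcmd : ∀ j : Fin E, c (md j) = v j := by
      intro j
      show (if h : md j ∈ M' then v (mo.symm ⟨md j, h⟩) else 0) = v j
      rw [dif_pos (mo j).2]
      have h2 : (⟨md j, (mo j).2⟩ : {x // x ∈ M'}) = mo j := Subtype.ext rfl
      rw [h2, OrderIso.symm_apply_apply]
    set S : Finset ℝ := Finset.image y Finset.univ with hS
    have hScard : S.card = E := by
      rw [hS, Finset.card_image_of_injective _ hymono.injective, Finset.card_univ,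
        Fintype.card_fin]
    have hzero : ∀ x ∈ S, ∑ m ∈ M', c m * x ^ m = 0 := by
      intro x hx
      obtain ⟨k, -, rfl⟩ := Finset.mem_image.mp hx
      have hsum : ∑ m ∈ M', c m * (y k) ^ m = ∑ j : Fin E, v j * (y k) ^ md j := by
        rw [← Finset.sum_coe_sort M' (fun m => c m * (y k) ^ m),
          ← Equiv.sum_comp mo.toEquiv (fun m : {x // x ∈ M'} => c (m : ℕ) * (y k) ^ (m : ℕ))]
        refine Finset.sum_congr rfl fun j _ => ?_
        simp only [RelIso.coe_fn_toEquiv]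
        rw [show ((mo j : ℕ)) = md j from rfl, hcmd j]
      rw [hsum]
      have := congrFun hv k
      simpa [Matrix.mulVec, dotProduct, Matrix.transpose_apply, hC, mul_comm, Matrix.transpose, Matrix.of_apply] using this
    by_contra hvj
    have hcne : ∃ m ∈ M', c m ≠ 0 := by
      refine ⟨md j, (mo j).2, ?_⟩
      rw [hcmd j]
      exact hvj
    have := fewnomial_roots E M' hM'card c hcne S (by
      intro x hx
      obtain ⟨k, -, rfl⟩ := Finset.mem_image.mp hx
      exact hypos k) hzero
    omega
  have hCunit : IsUnit C := by
    have h1 : IsUnit Cᵀ := Matrix.mulVec_injective_iff_isUnit.mp hCTinj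
    rwa [← Matrix.isUnit_transpose]
  -- solve the linear system
  set t : Fin E → ℝ := fun j => if md j = 0 then -1 else 0 with ht
  obtain ⟨α, hα⟩ := Matrix.mulVec_surjective_iff_isUnit.mpr hCunit t
  refine ⟨α, ?_⟩
  intro γ hγ n
  rw [trig_iteratedDeriv α (fun k => 2 * π * ((k : ℕ) + 1)) γ]
  simp only []
  -- evaluate cosines at the integer point
  have hcosval : ∀ k : Fin E, cos (2 * π * ((k : ℕ) + 1) * (n : ℝ) + γ * (π / 2))
      = cos (γ * (π / 2)) := by
    intro k
    have harg : 2 * π * ((k : ℕ) + 1) * (n : ℝ) + γ * (π / 2)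
        = ((((k : ℕ) + 1 : ℕ) : ℤ) * n : ℤ) * (2 * π) + γ * (π / 2) := by
      push_cast; ring
    rw [harg, Real.cos_add, Real.cos_int_mul_two_pi]
    have hsin : Real.sin ((((((k : ℕ) + 1 : ℕ) : ℤ) * n : ℤ) : ℝ) * (2 * π)) = 0 := by
      have : ((((((k : ℕ) + 1 : ℕ) : ℤ) * n : ℤ) : ℝ)) * (2 * π)
          = ((2 * ((((k : ℕ) + 1 : ℕ) : ℤ) * n) : ℤ) : ℝ) * π := by push_cast; ring
      rw [this, Real.sin_int_mul_pi]
    rw [hsin]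
    ring
  rcases Nat.even_or_odd γ with heven | hodd
  · -- even case
    obtain ⟨m, hm⟩ := heven
    have hγ2 : γ = 2 * m := by omega
    have hcos2 : cos ((γ : ℝ) * (π / 2)) = (-1) ^ m := by
      have : (γ : ℝ) * (π / 2) = m * π := by rw [hγ2]; push_cast; ring
      rw [this]
      simpa using Real.cos_nat_mul_pi_sub 0 m
    have hmem : γ / 2 ∈ M' := Finset.mem_image_of_mem _ (Finset.mem_filter.mpr ⟨hγ, ⟨m, hm⟩⟩)
    set j := mo.symm ⟨γ / 2, hmem⟩ with hj
    have hmdj : md j = γ / 2 := by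
      rw [hmd, hj]
      simp
    have hsys := congrFun hα j
    have hsys' : ∑ k : Fin E, y k ^ (γ / 2) * α k = if γ / 2 = 0 then -1 else 0 := by
      rw [← hmdj]
      simpa [Matrix.mulVec, dotProduct, hC, ht] using hsys
    have hpow : ∀ k : Fin E, (2 * π * ((k : ℕ) + 1)) ^ γ = y k ^ (γ / 2) := by
      intro k
      rw [hy]
      rw [← pow_mul]
      congr 1
      omega
    have : ∑ k : Fin E, α k * ((2 * π * ((k : ℕ) + 1)) ^ γ
        * cos (2 * π * ((k : ℕ) + 1) * (n : ℝ) + γ * (π / 2)))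
        = (-1) ^ m * ∑ k : Fin E, y k ^ (γ / 2) * α k := by
      rw [Finset.mul_sum]
      refine Finset.sum_congr rfl fun k _ => ?_
      rw [hcosval k, hcos2, hpow k]
      ring
    rw [this, hsys']
    rcases Nat.eq_zero_or_pos γ with h0' | hpos'
    · subst h0'
      have hm0 : m = 0 := by omega
      subst hm0
      norm_num
    · have h2 : γ / 2 ≠ 0 := by omega
      rw [if_neg (by omega), if_neg h2]
      ring
  · -- odd case
    obtain ⟨m, hm⟩ := hodd
    have hcos0 : cos ((γ : ℝ) * (π / 2)) = 0 := by
      have : (γ : ℝ) * (π / 2) = m * π + π / 2 := by rw [hm]; push_cast; ring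
      rw [this, Real.cos_add_pi_div_two, Real.sin_nat_mul_pi, neg_zero]
    have hiz : (if γ = 0 then (1:ℝ) else 0) = 0 := by
      rw [if_neg (by omega)]
    rw [hiz]
    have : ∑ k : Fin E, α k * ((2 * π * ((k : ℕ) + 1)) ^ γ
        * cos (2 * π * ((k : ℕ) + 1) * (n : ℝ) + γ * (π / 2))) = 0 := by
      refine Finset.sum_eq_zero fun k _ => ?_
      rw [hcosval k, hcos0]
      ring
    rw [this, add_zero]
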